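/- arXiv:1812.03346 — 3 statements merged into one kernel-verified Lean document; each statement's English description precedes it below -/
import Mathlib

section
/- Let A = K⟨S⟩ be a K-algebra generated by S, M = Ax a cyclic A-module, τ : M → A a transversal (K-linear, τ(x)=1, ax = τ(ax)x), T a basis of τ(M), and σ an FSS section. Then the set U = {1} ∪ {σ(st)st : s∈S, t∈T, τ(stx)≠0} ∪ {σ(st)⁻¹ − τ(stx) : s∈S, t∈T, τ(stx)≠0} ∪ {st : s∈S, t∈T, τ(stx)=0} satisfies U ⊆ K + Ann_A(x). -/
/-- The Frobenius–Schreier–Sims generators `U(S,T,σ,τ)` all lie in `K + Ann_A(x)`. -/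
theorem fss_generators_mem {K A M : Type*} [Field K] [Ring A] [Algebra K A]
    [AddCommGroup M] [Module K M] [Module A M] [IsScalarTower K A M]
    (S : Set A) (hS : Algebra.adjoin K S = ⊤)
    (x : M) (hcyc : ∀ m : M, ∃ a : A, a • x = m)
    (τ : M →ₗ[K] A) (hτx : τ x = 1) (hτ : ∀ a : A, a • x = τ (a • x) • x)
    (T : Set A) (hTsub : ∀ t ∈ T, t ∈ LinearMap.range τ)
    (hTspan : Submodule.span K T = LinearMap.range τ)
    (hTind : LinearIndependent K (fun t : T => (t : A)))
    (σ : A → Aˣ)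
    (hσ : ∀ s ∈ S, ∀ t ∈ T, τ ((s * t) • x) ≠ 0 →
      ((((σ (s * t))⁻¹ : Aˣ) : A) - τ ((s * t) • x)) • x = 0)
    (U : Set A)
    (hU : U = {1} ∪
      {u : A | ∃ s ∈ S, ∃ t ∈ T, τ ((s * t) • x) ≠ 0 ∧ u = ((σ (s * t) : Aˣ) : A) * (s * t)} ∪
      {u : A | ∃ s ∈ S, ∃ t ∈ T, τ ((s * t) • x) ≠ 0 ∧
        u = (((σ (s * t))⁻¹ : Aˣ) : A) - τ ((s * t) • x)} ∪
      {u : A | ∃ s ∈ S, ∃ t ∈ T, τ ((s * t) • x) = 0 ∧ u = s * t}) :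
    ∀ u ∈ U, ∃ c : K, (u - algebraMap K A c) • x = 0 := by
  subst hU
  rintro u (((rfl | hu) | hu) | hu)
  · exact ⟨1, by simp⟩
  · obtain ⟨s, hs, t, ht, hne, rfl⟩ := hu
    refine ⟨1, ?_⟩
    have h1 : ((((σ (s * t))⁻¹ : Aˣ) : A)) • x = (τ ((s * t) • x)) • x := by
      have := hσ s hs t ht hne
      rwa [sub_smul, sub_eq_zero] at this
    have h2 : (s * t) • x = ((((σ (s * t))⁻¹ : Aˣ) : A)) • x := by
      rw [h1]; exact hτ (s * t)
    rw [sub_smul, mul_smul, h2, ← mul_smul, Units.mul_inv]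
    simp
  · obtain ⟨s, hs, t, ht, hne, rfl⟩ := hu
    refine ⟨0, ?_⟩
    simpa using hσ s hs t ht hne
  · obtain ⟨s, hs, t, ht, hz, rfl⟩ := hu
    refine ⟨0, ?_⟩
    have := hτ (s * t)
    rw [hz] at this
    simpa using this
end

section
/- With the FSS data (S, T, σ, τ) as above and U = U(S,T,σ,τ), every element a ∈ A can be written as a = Σ_i λ_i t_i u_{i1}⋯u_{iℓ(i)} with λ_i ∈ K, t_i ∈ T, and u_{ij} ∈ U. Consequently the K-linear map Ax ⊗_K K⟨U⟩ → A given on pure tensors by (ax) ⊗ b ↦ τ(ax)·b is surjective. -/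
/-- Every `a ∈ A` is a `K`-linear combination of products `t · u₁ ⋯ u_ℓ` with `t ∈ T` and
`u_j` FSS generators; consequently the `K`-linear map `Ax ⊗_K K⟨U⟩ → A`,
`(a • x) ⊗ b ↦ τ(a • x) * b`, is surjective. -/
theorem fss_decomposition {K A M : Type*} [Field K] [Ring A] [Algebra K A]
    [AddCommGroup M] [Module K M] [Module A M] [IsScalarTower K A M]
    (S : Set A) (hS : Algebra.adjoin K S = ⊤)
    (x : M) (hcyc : ∀ m : M, ∃ a : A, a • x = m)
    (τ : M →ₗ[K] A) (hτx : τ x = 1) (hτ : ∀ a : A, a • x = τ (a • x) • x)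
    (T : Set A) (h1T : (1 : A) ∈ T) (hTsub : ∀ t ∈ T, t ∈ LinearMap.range τ)
    (hTspan : Submodule.span K T = LinearMap.range τ)
    (hTind : LinearIndependent K (fun t : T => (t : A)))
    (σ : A → Aˣ)
    (hσ : ∀ s ∈ S, ∀ t ∈ T, τ ((s * t) • x) ≠ 0 →
      ((((σ (s * t))⁻¹ : Aˣ) : A) - τ ((s * t) • x)) • x = 0)
    (U : Set A)
    (hU : U = {1} ∪
      {u : A | ∃ s ∈ S, ∃ t ∈ T, τ ((s * t) • x) ≠ 0 ∧ u = ((σ (s * t) : Aˣ) : A) * (s * t)} ∪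
      {u : A | ∃ s ∈ S, ∃ t ∈ T, τ ((s * t) • x) ≠ 0 ∧
        u = (((σ (s * t))⁻¹ : Aˣ) : A) - τ ((s * t) • x)} ∪
      {u : A | ∃ s ∈ S, ∃ t ∈ T, τ ((s * t) • x) = 0 ∧ u = s * t}) :
    (∀ a : A, a ∈ Submodule.span K
        {y : A | ∃ t ∈ T, ∃ u ∈ Submonoid.closure U, y = t * u}) ∧
    ∃ Γ : TensorProduct K M (Algebra.adjoin K U) →ₗ[K] A,
      (∀ (m : M) (b : Algebra.adjoin K U), Γ (m ⊗ₜ[K] b) = τ m * (b : A)) ∧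
      Function.Surjective Γ := by
  set G : Set A := {y : A | ∃ t ∈ T, ∃ u ∈ Submonoid.closure U, y = t * u} with hG
  have hmemG : ∀ t ∈ T, ∀ u ∈ Submonoid.closure U, t * u ∈ Submodule.span K G :=
    fun t ht u hu => Submodule.subset_span ⟨t, ht, u, hu, rfl⟩
  -- key step: left multiplication by s ∈ S of a generator stays in the span
  have key : ∀ s ∈ S, ∀ t ∈ T, ∀ u ∈ Submonoid.closure U,
      s * (t * u) ∈ Submodule.span K G := by
    intro s hs t ht u hu
    by_cases h0 : τ ((s * t) • x) = 0
    · have hst : s * t ∈ U := by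
        rw [hU]; exact Or.inr ⟨s, hs, t, ht, h0, rfl⟩
      have h1 : s * (t * u) = 1 * ((s * t) * u) := by rw [one_mul, mul_assoc]
      rw [h1]
      exact hmemG 1 h1T _ (mul_mem (Submonoid.subset_closure hst) hu)
    · set c := σ (s * t) with hc
      have hu1 : ((c : A) * (s * t)) ∈ U := by
        rw [hU]; exact Or.inl (Or.inl (Or.inr ⟨s, hs, t, ht, h0, rfl⟩))
      have hu2 : (((c⁻¹ : Aˣ) : A) - τ ((s * t) • x)) ∈ U := by
        rw [hU]; exact Or.inl (Or.inr ⟨s, hs, t, ht, h0, rfl⟩)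
      have hv : ((c : A) * (s * t)) * u ∈ Submonoid.closure U :=
        mul_mem (Submonoid.subset_closure hu1) hu
      have hrange : τ ((s * t) • x) ∈ Submodule.span K T := by
        rw [hTspan]; exact ⟨(s * t) • x, rfl⟩
      have hdecomp : s * (t * u) =
          (((c⁻¹ : Aˣ) : A) - τ ((s * t) • x)) * (((c : A) * (s * t)) * u)
            + τ ((s * t) • x) * (((c : A) * (s * t)) * u) := by
        rw [← add_mul, sub_add_cancel, ← mul_assoc, ← mul_assoc, Units.inv_mul_cancel_left,
          mul_assoc]
      rw [hdecomp]
      refine Submodule.add_mem _ ?_ ?_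
      · have h2 := hmemG 1 h1T _ (mul_mem (Submonoid.subset_closure hu2) hv)
        rwa [one_mul] at h2
      · -- τ ((s*t)•x) ∈ span K T, so the product lies in the span of G
        refine Submodule.span_induction
          (p := fun r _ => r * (((c : A) * (s * t)) * u) ∈ Submodule.span K G)
          ?_ ?_ ?_ ?_ hrange
        · intro t' ht'; exact hmemG t' ht' _ hv
        · simp
        · intro a b _ _ ha hb; rw [add_mul]; exact Submodule.add_mem _ ha hb
        · intro k a _ ha; rw [smul_mul_assoc]; exact Submodule.smul_mem _ _ ha
  have h1G : (1 : A) ∈ Submodule.span K G := by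
    have := hmemG 1 h1T 1 (one_mem _)
    rwa [one_mul] at this
  -- every a ∈ A multiplies the span into itself
  have main : ∀ a : A, ∀ w ∈ Submodule.span K G, a * w ∈ Submodule.span K G := by
    intro a
    have ha : a ∈ Algebra.adjoin K S := by rw [hS]; trivial
    refine Algebra.adjoin_induction
      (p := fun a _ => ∀ w ∈ Submodule.span K G, a * w ∈ Submodule.span K G)
      ?_ ?_ ?_ ?_ ha
    · intro s hs w hw
      refine Submodule.span_induction
        (p := fun w _ => s * w ∈ Submodule.span K G) ?_ ?_ ?_ ?_ hw
      · rintro y ⟨t, ht, u, hu, rfl⟩; exact key s hs t ht u hu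
      · simp
      · intro a b _ _ ha hb; rw [mul_add]; exact Submodule.add_mem _ ha hb
      · intro k a _ ha; rw [mul_smul_comm]; exact Submodule.smul_mem _ _ ha
    · intro r w hw
      rw [← Algebra.smul_def]
      exact Submodule.smul_mem _ _ hw
    · intro a b _ _ ha hb w hw
      rw [add_mul]
      exact Submodule.add_mem _ (ha w hw) (hb w hw)
    · intro a b _ _ ha hb w hw
      rw [mul_assoc]
      exact ha _ (hb w hw)
  have part1 : ∀ a : A, a ∈ Submodule.span K G := by
    intro a
    have := main a 1 h1G
    rwa [mul_one] at this
  refine ⟨part1, ?_⟩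
  -- construct Γ
  set Γ : TensorProduct K M (Algebra.adjoin K U) →ₗ[K] A :=
    TensorProduct.lift (((LinearMap.mul K A).comp τ).compl₂
      (Algebra.adjoin K U).val.toLinearMap) with hΓ
  have hΓval : ∀ (m : M) (b : Algebra.adjoin K U), Γ (m ⊗ₜ[K] b) = τ m * (b : A) := by
    intro m b; simp [hΓ]
  refine ⟨Γ, hΓval, ?_⟩
  intro a
  have ha := part1 a
  have hrange : Submodule.span K G ≤ LinearMap.range Γ := by
    rw [Submodule.span_le]
    rintro y ⟨t, ht, u, hu, rfl⟩
    obtain ⟨m, hm⟩ := hTsub t ht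
    have hu' : u ∈ Algebra.adjoin K U := by
      have hle : Submonoid.closure U ≤ (Algebra.adjoin K U).toSubmonoid :=
        Submonoid.closure_le.mpr Algebra.subset_adjoin
      exact hle hu
    exact ⟨m ⊗ₜ[K] (⟨u, hu'⟩ : Algebra.adjoin K U), by rw [hΓval, hm]⟩
  obtain ⟨z, hz⟩ := hrange ha
  exact ⟨z, hz⟩
end

section
/- Let A be a K-algebra with a chain of subalgebras A = A₀ > A₁ > ⋯ > A_ℓ, elements x₁,…,x_ℓ of an A-module M, and K-linear surjections A_{i−1}x_i ⊗_K A_i → A_{i−1} for each i. Then there is a K-linear surjection A₀x₁ ⊗ ⋯ ⊗ A_{ℓ−1}x_ℓ ⊗ A_ℓ → A, and hence dim_K A ≤ (∏_{i=1}^{ℓ} dim_K A_{i−1}x_i) · dim_K A_ℓ when all these spaces are finite dimensional. -/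
open scoped TensorProduct

open PiTensorProduct Module

section Aux

variable {R : Type*} [CommSemiring R]

/-- Dependent "cons" equivalence for pi tensor products over `Fin (n+1)`. -/
noncomputable def piTensorConsEquiv {n : ℕ} (s : Fin (n + 1) → Type*)
    [∀ i, AddCommMonoid (s i)] [∀ i, Module R (s i)] :
    (⨂[R] i, s i) ≃ₗ[R] (s 0) ⊗[R] (⨂[R] i : Fin n, s i.succ) := by
  refine LinearEquiv.ofLinear
    (PiTensorProduct.lift (LinearMap.uncurryLeft
      { toFun := fun x =>
          (TensorProduct.mk R (s 0) (⨂[R] i : Fin n, s i.succ) x).compMultilinearMap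
            (PiTensorProduct.tprod R)
        map_add' := by
          intro a b; ext g
          simp [TensorProduct.add_tmul]
        map_smul' := by
          intro c a; ext g
          simp [TensorProduct.smul_tmul'] }))
    (TensorProduct.lift
      ((PiTensorProduct.lift (R := R)
          (s := fun i : Fin n => s i.succ)).toLinearMap ∘ₗ
        (PiTensorProduct.tprod R (s := s)).curryLeft))
    ?_ ?_
  · ext y g
    simp [LinearMap.uncurryLeft_apply, Fin.tail]
  · ext g
    simp [LinearMap.uncurryLeft_apply, Fin.tail, Fin.cons_self_tail]

end Aux

section Dim

variable (K : Type*) [Field K]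

theorem piTensor_findim :
    ∀ (n : ℕ) (s : Fin n → Type*) (_ : ∀ i, AddCommGroup (s i))
      (_ : ∀ i, Module K (s i)) (_ : ∀ i, FiniteDimensional K (s i)),
      FiniteDimensional K (⨂[K] i, s i) ∧
        finrank K (⨂[K] i, s i) = ∏ i, finrank K (s i) := by
  intro n
  induction n with
  | zero =>
    intro s _ _ _
    have e := PiTensorProduct.isEmptyEquiv (R := K) (s := s) (Fin 0)
    constructor
    · exact FiniteDimensional.of_injective e.toLinearMap e.injective
    · rw [e.finrank_eq]
      simp
  | succ n ih =>
    intro s _ _ _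
    have e := piTensorConsEquiv (R := K) s
    obtain ⟨h1, h2⟩ := ih (fun i => s i.succ) _ _ (fun i => inferInstance)
    have : FiniteDimensional K ((s 0) ⊗[K] (⨂[K] i : Fin n, s i.succ)) :=
      Module.Finite.tensorProduct K _ _
    constructor
    · exact FiniteDimensional.of_injective e.toLinearMap e.injective
    · rw [e.finrank_eq, finrank_tensorProduct, h2, Fin.prod_univ_succ]

/-- If `finrank W ≤ finrank V` (finite-dimensional), there is a surjection `V →ₗ W`. -/
theorem exists_surjective_of_finrank_le {V W : Type*} [AddCommGroup V] [Module K V]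
    [AddCommGroup W] [Module K W] [FiniteDimensional K V] [FiniteDimensional K W]
    (h : finrank K W ≤ finrank K V) : ∃ g : V →ₗ[K] W, Function.Surjective g := by
  classical
  let bV := Module.finBasis K V
  let bW := Module.finBasis K W
  refine ⟨bV.constr K (fun i => if h : (i : ℕ) < finrank K W then bW ⟨i, h⟩ else 0), ?_⟩
  rw [← LinearMap.range_eq_top, ← top_le_iff, ← bW.span_eq, Submodule.span_le]
  rintro w ⟨j, rfl⟩
  refine ⟨bV (Fin.castLE h j), ?_⟩
  rw [Basis.constr_basis]
  have hlt : ((Fin.castLE h j : Fin (finrank K V)) : ℕ) < finrank K W := j.isLt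
  rw [dif_pos hlt]
  congr 1

/-- numeric induction along the chain -/
theorem chain_dim_aux : ∀ (ℓ : ℕ) (d : Fin (ℓ + 1) → ℕ) (c : Fin ℓ → ℕ)
    (_ : ∀ i : Fin ℓ, d i.castSucc ≤ c i * d i.succ),
    d 0 ≤ (∏ i, c i) * d (Fin.last ℓ) := by
  intro ℓ
  induction ℓ with
  | zero => intro d c _; simp [Fin.last]
  | succ n ih =>
    intro d c hdc
    have h0 : d 0 ≤ c 0 * d 1 := by simpa using hdc 0
    have h1 := ih (fun i => d i.succ) (fun i => c i.succ)
      (fun i => by simpa only [Fin.succ_castSucc] using hdc i.succ)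
    calc d 0 ≤ c 0 * d 1 := h0
      _ ≤ c 0 * ((∏ i : Fin n, c i.succ) * d (Fin.last (n + 1))) := by
          apply Nat.mul_le_mul_left
          simpa [Fin.succ_last] using h1
      _ = (∏ i, c i) * d (Fin.last (n + 1)) := by
          rw [Fin.prod_univ_succ, mul_assoc]

end Dim

/-- Given a chain of subalgebras `A = A₀ > A₁ > ⋯ > A_ℓ`, cyclic modules
`M_i = A_{i-1} x_i`, and `K`-linear surjections `A_{i-1}x_i ⊗ A_i → A_{i-1}`, there is a
`K`-linear surjection `A₀x₁ ⊗ ⋯ ⊗ A_{ℓ-1}x_ℓ ⊗ A_ℓ → A`, whence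
`dim A ≤ (∏ dim A_{i-1}x_i) · dim A_ℓ`. -/
theorem chain_tensor_surjection {K A M : Type*} [Field K] [Ring A] [Algebra K A]
    [AddCommGroup M] [Module K M] [Module A M] [IsScalarTower K A M]
    [FiniteDimensional K A] [FiniteDimensional K M]
    (ℓ : ℕ) (A_ : Fin (ℓ + 1) → Subalgebra K A)
    (htop : A_ 0 = ⊤) (hchain : StrictAnti A_)
    (x : Fin ℓ → M) (C : Fin ℓ → Submodule K M)
    (hC : ∀ i : Fin ℓ, (C i : Set M) = {m : M | ∃ a ∈ A_ i.castSucc, m = a • x i})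
    (f : ∀ i : Fin ℓ, TensorProduct K (C i) (A_ i.succ) →ₗ[K] (A_ i.castSucc))
    (hf : ∀ i : Fin ℓ, Function.Surjective (f i)) :
    (∃ g : TensorProduct K (⨂[K] i : Fin ℓ, C i) (A_ (Fin.last ℓ)) →ₗ[K] A,
        Function.Surjective g) ∧
    Module.finrank K A ≤
      (∏ i : Fin ℓ, Module.finrank K (C i)) * Module.finrank K (A_ (Fin.last ℓ)) := by
  classical
  -- dimension bound
  have step : ∀ i : Fin ℓ,
      finrank K (A_ i.castSucc) ≤ finrank K (C i) * finrank K (A_ i.succ) := by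
    intro i
    have hle : finrank K (A_ i.castSucc) ≤
        finrank K (TensorProduct K (C i) (A_ i.succ)) := by
      have := (hf i)
      have hr : LinearMap.range (f i) = ⊤ := LinearMap.range_eq_top.mpr this
      calc finrank K (A_ i.castSucc)
          = finrank K (LinearMap.range (f i)) := by rw [hr, finrank_top]
        _ ≤ finrank K (TensorProduct K (C i) (A_ i.succ)) := (f i).finrank_range_le
    rwa [Module.finrank_tensorProduct] at hle
  have hdim : finrank K A ≤
      (∏ i : Fin ℓ, finrank K (C i)) * finrank K (A_ (Fin.last ℓ)) := by
    have h0 : finrank K (A_ 0) = finrank K A := by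
      rw [htop]
      exact (Subalgebra.topEquiv (R := K) (A := A)).toLinearEquiv.finrank_eq
    have h2 := chain_dim_aux ℓ (fun i => finrank K (A_ i)) (fun i => finrank K (C i)) step
    rw [← h0]
    exact h2
  refine ⟨?_, hdim⟩
  obtain ⟨hfd, hrank⟩ := piTensor_findim K ℓ (fun i => C i) _ _ (fun i => inferInstance)
  haveI := hfd
  haveI : FiniteDimensional K
      (TensorProduct K (⨂[K] i : Fin ℓ, C i) (A_ (Fin.last ℓ))) :=
    Module.Finite.tensorProduct K _ _
  exact exists_surjective_of_finrank_le K
    (V := TensorProduct K (⨂[K] i : Fin ℓ, C i) (A_ (Fin.last ℓ))) (W := A)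
    (by rw [Module.finrank_tensorProduct, hrank]; exact hdim)
end
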